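/- Key inequality in the proof of Boyer's lemma: under the hypotheses of the generalized Boyer lemma, setting b_λ = Σ_{ν∈I_m} β_ν·ν ∈ K_0^+(Γ), for every N one has λ ≥_K N·b_λ in K_0(Γ), i.e. λ − N·b_λ lies in the positive cone K_0^+(Γ). -/

import Mathlib

open Filter Topology ENNReal
open scoped Classical

noncomputable section

structure GradedGraph where
  V : Type
  lvl : V → ℕ
  levelFinite : ∀ n : ℕ, {v : V | lvl v = n}.Finite
  k : V → V → ℝ
  k_nonneg : ∀ a b, 0 ≤ k a b
  k_grade : ∀ a b, k a b ≠ 0 → lvl b = lvl a + 1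
  exists_up : ∀ a, ∃ b, 0 < k a b

namespace GradedGraph

variable (G : GradedGraph)

/-- The edge relation `λ ↗ μ`. -/
def Adj (a b : G.V) : Prop := 0 < G.k a b

/-- The path order: `a ≤ b` iff there is a (possibly empty) path from `a` to `b`. -/
def Le : G.V → G.V → Prop := Relation.ReflTransGen G.Adj

/-- `dimAux n a b` : weighted number of paths of length `n` from `a` to `b`. -/
def dimAux : ℕ → G.V → G.V → ℝ
  | 0, a, b => if a = b then 1 else 0
  | n + 1, a, b => ∑ᶠ c, dimAux n a c * G.k c b

/-- The shifted dimension `dim(a,b)`: weighted number of paths from `a` to `b`. -/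
def dim (a b : G.V) : ℝ := G.dimAux (G.lvl b - G.lvl a) a b

def IsIdeal (I : Set G.V) : Prop := ∀ a ∈ I, ∀ b, G.Le a b → b ∈ I

def IsCoideal (J : Set G.V) : Prop := ∀ a ∈ J, ∀ b, G.Le b a → b ∈ J

def IsSaturatedIdeal (I : Set G.V) : Prop :=
  G.IsIdeal I ∧ ∀ a, (∀ b, G.Adj a b → b ∈ I) → a ∈ I

def IsSaturatedCoideal (J : Set G.V) : Prop :=
  G.IsCoideal J ∧ ∀ a ∈ J, ∃ b ∈ J, G.Adj a b

def IsPrimitiveCoideal (J : Set G.V) : Prop :=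
  G.IsSaturatedCoideal J ∧ ∀ J1 J2 : Set G.V, G.IsSaturatedCoideal J1 →
    G.IsSaturatedCoideal J2 → J = J1 ∪ J2 → J = J1 ∨ J = J2

/-- A harmonic function `φ : Γ → ℝ≥0 ∪ {+∞}`. -/
def Harmonic (φ : G.V → ℝ≥0∞) : Prop :=
  ∀ a, φ a = ∑ᶠ b, ENNReal.ofReal (G.k a b) * φ b

/-- The submodule of relations `λ = Σ_{μ : λ↗μ} κ(λ,μ)·μ` in the free module on vertices. -/
def relSub : Submodule ℝ (G.V →₀ ℝ) :=
  Submodule.span ℝ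
    {x | ∃ a : G.V, x = Finsupp.single a 1 - ∑ᶠ b, G.k a b • Finsupp.single b (1 : ℝ)}

/-- The group `K_0(Γ)`. -/
abbrev K0 := (G.V →₀ ℝ) ⧸ G.relSub

def toK0 : (G.V →₀ ℝ) →ₗ[ℝ] G.K0 := G.relSub.mkQ

/-- The class of a vertex in `K_0(Γ)`. -/
def vtx (a : G.V) : G.K0 := G.toK0 (Finsupp.single a 1)

/-- The positive cone `K_0^+(Γ)` generated by the vertices. -/
def cone : Set G.K0 := {x | ∃ c : G.V →₀ ℝ, (∀ a, 0 ≤ c a) ∧ x = G.toK0 c}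

/-- The partial order `x ≤_K y` defined by the cone. -/
def leK (x y : G.K0) : Prop := y - x ∈ G.cone

/-- The value of (the `ℝ≥0`-linear extension of) `φ` on a nonnegative element of the
free module on vertices. -/
def evalC (φ : G.V → ℝ≥0∞) (c : G.V →₀ ℝ) : ℝ≥0∞ :=
  ∑ a ∈ c.support, ENNReal.ofReal (c a) * φ a

/-- A semifinite harmonic function: it is harmonic, not everywhere finite, and its value
on any element of the cone is the supremum of its finite values on smaller cone elements
(stated on nonnegative representatives). -/
def Semifinite (φ : G.V → ℝ≥0∞) : Prop :=
  G.Harmonic φ ∧ (∃ a, φ a = ⊤) ∧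
    ∀ c : G.V →₀ ℝ, (∀ a, 0 ≤ c a) →
      G.evalC φ c = ⨆ d : {d : G.V →₀ ℝ //
        (∀ a, 0 ≤ d a) ∧ G.leK (G.toK0 d) (G.toK0 c) ∧ G.evalC φ d ≠ ⊤},
          G.evalC φ d.1

/-- A finite or semifinite harmonic function. -/
def FinOrSemifinite (φ : G.V → ℝ≥0∞) : Prop :=
  (G.Harmonic φ ∧ ∀ a, φ a ≠ ⊤) ∨ G.Semifinite φ

/-- An indecomposable (finite or semifinite, not identically zero) harmonic function:
any finite or semifinite harmonic `ψ ≤ φ` not vanishing identically on the finiteness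
ideal of `φ` is proportional to `φ` on the finiteness ideal of `φ`. -/
def Indecomposable (φ : G.V → ℝ≥0∞) : Prop :=
  G.FinOrSemifinite φ ∧ (∃ a, φ a ≠ 0) ∧
    ∀ ψ : G.V → ℝ≥0∞, G.FinOrSemifinite ψ → (∀ a, ψ a ≤ φ a) →
      (∃ a, φ a ≠ ⊤ ∧ ψ a ≠ 0) →
        ∃ C : ℝ≥0∞, ∀ a, φ a ≠ ⊤ → ψ a = C * φ a

end GradedGraph

structure BranchingGraph extends GradedGraph where
  root : V
  root_lvl : lvl root = 0
  root_unique : ∀ v, lvl v = 0 → v = root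
  exists_down : ∀ v, lvl v ≠ 0 → ∃ u, 0 < k u v

end

noncomputable section BoyerAux

namespace GradedGraph

variable (G : GradedGraph)

lemma dimAux_nonneg (n : ℕ) : ∀ a b, 0 ≤ G.dimAux n a b := by
  induction n with
  | zero => intro a b; rw [dimAux]; split <;> norm_num
  | succ n ih =>
      intro a b
      rw [dimAux]
      exact finsum_nonneg fun c => mul_nonneg (ih a c) (G.k_nonneg c b)

lemma exists_ne_zero_of_finsum_ne_zero {α : Type*} {f : α → ℝ} (h : ∑ᶠ i, f i ≠ 0) :
    ∃ i, f i ≠ 0 := by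
  by_contra hc
  push_neg at hc
  exact h (finsum_eq_zero_of_forall_eq_zero hc)

lemma le_of_dimAux_ne_zero (n : ℕ) : ∀ a b, G.dimAux n a b ≠ 0 → G.Le a b := by
  induction n with
  | zero =>
      intro a b
      rw [dimAux]
      intro h
      have : a = b := by by_contra hab; simp [hab] at h
      exact this ▸ Relation.ReflTransGen.refl
  | succ n ih =>
      intro a b
      rw [dimAux]
      intro h
      obtain ⟨c, hc⟩ := exists_ne_zero_of_finsum_ne_zero h
      have h1 : G.dimAux n a c ≠ 0 := left_ne_zero_of_mul hc
      have h2 : G.k c b ≠ 0 := right_ne_zero_of_mul hc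
      have hadj : G.Adj c b := lt_of_le_of_ne (G.k_nonneg c b) (Ne.symm h2)
      exact Relation.ReflTransGen.tail (ih a c h1) hadj

lemma lvl_of_dimAux_ne_zero (n : ℕ) : ∀ a b, G.dimAux n a b ≠ 0 → G.lvl b = G.lvl a + n := by
  induction n with
  | zero =>
      intro a b
      rw [dimAux]
      intro h
      have : a = b := by by_contra hab; simp [hab] at h
      simp [this]
  | succ n ih =>
      intro a b
      rw [dimAux]
      intro h
      obtain ⟨c, hc⟩ := exists_ne_zero_of_finsum_ne_zero h
      have h1 : G.dimAux n a c ≠ 0 := left_ne_zero_of_mul hc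
      have h2 : G.k c b ≠ 0 := right_ne_zero_of_mul hc
      rw [G.k_grade c b h2, ih a c h1, Nat.add_assoc]

lemma k_support_finite (a : G.V) : {b | G.k a b ≠ 0}.Finite :=
  (G.levelFinite (G.lvl a + 1)).subset fun b hb => G.k_grade a b hb

/-- The finset of out-neighbours of `a`. -/
def rowFinset (a : G.V) : Finset G.V := (G.k_support_finite a).toFinset

/-- The element `Σ_b κ(a,b)·b` of the free module. -/
def row (a : G.V) : G.V →₀ ℝ := ∑ b ∈ G.rowFinset a, G.k a b • Finsupp.single b 1

lemma row_apply (a b : G.V) : G.row a b = G.k a b := by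
  rw [row, Finset.sum_apply']
  simp only [Finsupp.smul_apply, Finsupp.single_apply, smul_eq_mul, mul_ite, mul_one, mul_zero]
  rw [Finset.sum_ite_eq' (G.rowFinset a) b (fun b' => G.k a b')]
  split
  · rfl
  · next hb =>
      by_contra hk
      exact hb ((G.k_support_finite a).mem_toFinset.2 (Ne.symm hk))

lemma finsum_row (a : G.V) : ∑ᶠ b, G.k a b • Finsupp.single b (1 : ℝ) = G.row a := by
  rw [row]
  apply finsum_eq_sum_of_support_subset
  intro b hb
  have hk : G.k a b ≠ 0 := by
    intro h0
    apply hb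
    simp [Function.mem_support, h0]
  exact (G.k_support_finite a).mem_toFinset.2 hk

lemma toK0_single_eq_row (a : G.V) :
    G.toK0 (Finsupp.single a 1) = G.toK0 (G.row a) := by
  have h : (Finsupp.single a 1 - G.row a) ∈ G.relSub :=
    Submodule.subset_span ⟨a, by rw [G.finsum_row a]⟩
  rw [toK0, Submodule.mkQ_apply, Submodule.mkQ_apply]
  exact (Submodule.Quotient.eq _).2 h

/-- One-step transfer in the free module. -/
def step (c : G.V →₀ ℝ) : G.V →₀ ℝ := c.sum fun a ca => ca • G.row a

lemma step_apply (c : G.V →₀ ℝ) (b : G.V) :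
    G.step c b = ∑ a ∈ c.support, c a * G.k a b := by
  rw [step, Finsupp.sum_apply, Finsupp.sum]
  exact Finset.sum_congr rfl fun a _ => by rw [Finsupp.smul_apply, smul_eq_mul, G.row_apply]

lemma toK0_step (c : G.V →₀ ℝ) : G.toK0 (G.step c) = G.toK0 c := by
  conv_rhs => rw [← Finsupp.sum_single c]
  rw [step, map_finsuppSum, map_finsuppSum]
  refine Finsupp.sum_congr fun a _ => ?_
  rw [map_smul, ← G.toK0_single_eq_row, ← map_smul, Finsupp.smul_single, smul_eq_mul, mul_one]

lemma toK0_step_iter (r : ℕ) (c : G.V →₀ ℝ) : G.toK0 (G.step^[r] c) = G.toK0 c := by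
  induction r with
  | zero => rfl
  | succ r ih => rw [Function.iterate_succ_apply', G.toK0_step, ih]

lemma step_nonneg {c : G.V →₀ ℝ} (hc : ∀ a, 0 ≤ c a) (b : G.V) : 0 ≤ G.step c b := by
  rw [step_apply]
  exact Finset.sum_nonneg fun a _ => mul_nonneg (hc a) (G.k_nonneg a b)

lemma step_iter_apply {c : G.V →₀ ℝ} (hc : ∀ a, 0 ≤ c a) :
    ∀ r b, (G.step^[r] c) b = ∑ a ∈ c.support, c a * G.dimAux r a b := by
  intro r
  induction r with
  | zero =>
      intro b
      simp only [Function.iterate_zero, id_eq, dimAux, mul_ite, mul_one, mul_zero]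
      rw [Finset.sum_ite_eq' c.support b (fun a => c a)]
      split
      · rfl
      · next hb => exact Finsupp.notMem_support_iff.1 hb
  | succ r ih =>
      intro b
      have hiter_nn : ∀ x, 0 ≤ (G.step^[r] c) x := by
        intro x
        rw [ih x]
        exact Finset.sum_nonneg fun a _ => mul_nonneg (hc a) (G.dimAux_nonneg r a x)
      rw [Function.iterate_succ_apply', G.step_apply]
      have hterm : ∀ a ∈ c.support,
          ∑ x ∈ (G.step^[r] c).support, G.dimAux r a x * G.k x b
            = G.dimAux (r + 1) a b := by
        intro a ha
        rw [show G.dimAux (r + 1) a b = ∑ᶠ x, G.dimAux r a x * G.k x b from by rw [dimAux]]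
        refine (finsum_eq_sum_of_support_subset _ ?_).symm
        intro x hx
        have hda : G.dimAux r a x ≠ 0 := left_ne_zero_of_mul hx
        have hca : 0 < c a := lt_of_le_of_ne (hc a) (Ne.symm (Finsupp.mem_support_iff.1 ha))
        have hpos : 0 < (G.step^[r] c) x := by
          rw [ih x]
          refine lt_of_lt_of_le ?_ (Finset.single_le_sum
            (fun a' _ => mul_nonneg (hc a') (G.dimAux_nonneg r a' x)) ha)
          exact mul_pos hca (lt_of_le_of_ne (G.dimAux_nonneg r a x) (Ne.symm hda))
        exact Finsupp.mem_support_iff.2 (ne_of_gt hpos)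
      calc ∑ x ∈ (G.step^[r] c).support, (G.step^[r] c) x * G.k x b
          = ∑ x ∈ (G.step^[r] c).support, ∑ a ∈ c.support, c a * G.dimAux r a x * G.k x b := by
            refine Finset.sum_congr rfl fun x _ => ?_
            rw [ih x, Finset.sum_mul]
        _ = ∑ a ∈ c.support, ∑ x ∈ (G.step^[r] c).support, c a * (G.dimAux r a x * G.k x b) := by
            rw [Finset.sum_comm]
            exact Finset.sum_congr rfl fun x _ => Finset.sum_congr rfl fun a _ => by ring
        _ = ∑ a ∈ c.support, c a * G.dimAux (r + 1) a b := by
            refine Finset.sum_congr rfl fun a ha => ?_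
            rw [← Finset.mul_sum, hterm a ha]

lemma step_lvl {c : G.V →₀ ℝ} {p : ℕ} (hc : ∀ a, c a ≠ 0 → G.lvl a = p) :
    ∀ b, G.step c b ≠ 0 → G.lvl b = p + 1 := by
  intro b hb
  rw [step_apply] at hb
  obtain ⟨a, ha, hne⟩ := Finset.exists_ne_zero_of_sum_ne_zero hb
  rw [G.k_grade a b (right_ne_zero_of_mul hne), hc a (left_ne_zero_of_mul hne)]

lemma step_iter_lvl {c : G.V →₀ ℝ} {p : ℕ} (hc : ∀ a, c a ≠ 0 → G.lvl a = p) :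
    ∀ r b, (G.step^[r] c) b ≠ 0 → G.lvl b = p + r := by
  intro r
  induction r with
  | zero => exact hc
  | succ r ih =>
      intro b hb
      rw [Function.iterate_succ_apply'] at hb
      rw [← Nat.add_assoc]
      exact G.step_lvl ih b hb

lemma mem_cone {c : G.V →₀ ℝ} (hc : ∀ a, 0 ≤ c a) : G.toK0 c ∈ G.cone := ⟨c, hc, rfl⟩

end GradedGraph

end BoyerAux

/-- the key inequality of Boyer's lemma: under the hypotheses of the
generalized Boyer lemma, with `b_λ = Σ_ν β_ν · ν`, one has `λ ≥_K N · b_λ` in `K_0(Γ)`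
for every `N`. -/
theorem boyer_key_inequality (G : GradedGraph) (φ : G.V → ℝ≥0∞) (hφ : G.Harmonic φ)
    (I : Set G.V) (hI : G.IsIdeal I) (lam : G.V) (hlam : lam ∉ I)
    (m : ℕ) (β : G.V →₀ ℝ) (hβ0 : ∀ ν, 0 ≤ β ν)
    (hβsupp : ∀ ν, β ν ≠ 0 → ν ∈ I ∧ G.lvl ν = m)
    (hex : ∃ ν, ν ∈ I ∧ G.lvl ν = m ∧ β ν ≠ 0 ∧ φ ν ≠ 0)
    (hineq : ∃ L, ∀ l ≥ L, ∀ η, η ∈ I → G.lvl η = G.lvl lam + l + 1 →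
      (∑ᶠ ν ∈ {ν : G.V | ν ∈ I ∧ G.lvl ν = m}, β ν * G.dim ν η) ≤
        ∑ᶠ μ ∈ {μ : G.V | μ ∉ I ∧ G.lvl μ = G.lvl lam + l},
          G.dim lam μ * G.k μ η) :
    ∀ N : ℕ, G.leK ((N : ℝ) • G.toK0 β) (G.vtx lam) := by
  classical
  obtain ⟨L, hL⟩ := hineq
  set n := G.lvl lam with hn
  set L' := max L m with hL'def
  set D : ℕ → (G.V →₀ ℝ) := fun l => G.step^[l] (Finsupp.single lam 1) with hD
  have hsnn : ∀ a, (0 : ℝ) ≤ Finsupp.single lam (1 : ℝ) a := fun a => by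
    rw [Finsupp.single_apply]; split <;> norm_num
  have hDsucc : ∀ t, D (t + 1) = G.step (D t) := by
    intro t; simp only [hD, Function.iterate_succ_apply']
  have hDapp : ∀ l b, D l b = G.dimAux l lam b := by
    intro l b
    simp only [hD]
    rw [G.step_iter_apply hsnn]
    rw [Finsupp.support_single_ne_zero lam one_ne_zero, Finset.sum_singleton,
      Finsupp.single_eq_same, one_mul]
  have hDnn : ∀ l b, 0 ≤ D l b := fun l b => by
    rw [hDapp]; exact G.dimAux_nonneg l lam b
  have hDlvl : ∀ l b, D l b ≠ 0 → G.lvl b = n + l := by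
    intro l b h
    rw [hDapp] at h
    rw [hn]
    exact G.lvl_of_dimAux_ne_zero l lam b h
  have hDK0 : ∀ l, G.toK0 (D l) = G.vtx lam := fun l => G.toK0_step_iter l _
  set Jp : ℕ → (G.V →₀ ℝ) := fun j => (D (L' + j)).filter (fun μ => μ ∉ I) with hJp
  have hJpapp : ∀ j b, Jp j b = if b ∉ I then D (L' + j) b else 0 := by
    intro j b
    simp only [hJp]
    rw [Finsupp.filter_apply]
  have hJpnn : ∀ j a, 0 ≤ Jp j a := by
    intro j a
    rw [hJpapp]
    split
    · exact hDnn _ a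
    · exact le_refl 0
  have key : ∀ j : ℕ, ∃ e : G.V →₀ ℝ, (∀ a, 0 ≤ e a) ∧
      G.toK0 (Jp j) = G.toK0 β + G.toK0 (Jp (j + 1)) + G.toK0 e := by
    intro j
    set l := L' + j with hl
    have hlL : L ≤ l := le_trans (le_max_left L m) (Nat.le_add_right L' j)
    have hml : m ≤ n + l + 1 := by
      have : m ≤ L' := le_max_right L m
      omega
    set r := n + l + 1 - m with hr
    set E := G.step (Jp j) with hE
    set Bv := G.step^[r] β with hBv
    have hJpsupp : ∀ a, a ∈ (Jp j).support → a ∉ I ∧ D l a ≠ 0 := by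
      intro a ha
      have hne := Finsupp.mem_support_iff.1 ha
      rw [hJpapp] at hne
      by_cases hI' : a ∈ I
      · simp [hI'] at hne
      · exact ⟨hI', by simpa [hI'] using hne⟩
    have hJpD : ∀ a, a ∉ I → Jp j a = D l a := fun a ha => by
      rw [hJpapp]; simp [ha]; rfl
    have hED : ∀ b, E b = ∑ a ∈ (D l).support, Jp j a * G.k a b := by
      intro b
      rw [hE, G.step_apply]
      apply Finset.sum_subset
      · intro a ha
        exact Finsupp.mem_support_iff.2 (hJpsupp a ha).2
      · intro a _ ha
        rw [Finsupp.notMem_support_iff.1 ha, zero_mul]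
    have hEnn : ∀ b, 0 ≤ E b := fun b => G.step_nonneg (hJpnn j) b
    have hkI : ∀ a b, a ∈ I → b ∉ I → G.k a b = 0 := by
      intro a b haI hbI
      by_contra hk
      exact hbI (hI a haI b (Relation.ReflTransGen.single
        (lt_of_le_of_ne (G.k_nonneg a b) (Ne.symm hk))))
    have hEJ : ∀ b, b ∉ I → E b = D (l + 1) b := by
      intro b hb
      have hDstep : D (l + 1) b = ∑ a ∈ (D l).support, D l a * G.k a b := by
        rw [hDsucc l, G.step_apply]
      rw [hED b, hDstep]
      refine Finset.sum_congr rfl fun a _ => ?_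
      by_cases haI : a ∈ I
      · rw [hkI a b haI hb, mul_zero, mul_zero]
      · rw [hJpD a haI]
    have hBvapp : ∀ b, Bv b = ∑ ν ∈ β.support, β ν * G.dimAux r ν b := fun b =>
      G.step_iter_apply hβ0 r b
    have hBvnn : ∀ b, 0 ≤ Bv b := by
      intro b
      rw [hBvapp]
      exact Finset.sum_nonneg fun ν _ => mul_nonneg (hβ0 ν) (G.dimAux_nonneg r ν b)
    have hBvI : ∀ b, b ∉ I → Bv b = 0 := by
      intro b hb
      rw [hBvapp]
      apply Finset.sum_eq_zero
      intro ν hν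
      have hβν := Finsupp.mem_support_iff.1 hν
      by_cases hd : G.dimAux r ν b = 0
      · rw [hd, mul_zero]
      · exact absurd (hI ν (hβsupp ν hβν).1 b (G.le_of_dimAux_ne_zero r ν b hd)) hb
    have hBvlvl : ∀ b, Bv b ≠ 0 → G.lvl b = n + l + 1 := by
      intro b hb
      rw [hBvapp] at hb
      obtain ⟨ν, hν, hne⟩ := Finset.exists_ne_zero_of_sum_ne_zero hb
      rw [G.lvl_of_dimAux_ne_zero r ν b (right_ne_zero_of_mul hne),
        (hβsupp ν (left_ne_zero_of_mul hne)).2]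
      omega
    have hK0Bv : G.toK0 Bv = G.toK0 β := G.toK0_step_iter r β
    have hmain : ∀ b, Bv b ≤ (E.filter (fun b => b ∈ I)) b := by
      intro b
      rw [Finsupp.filter_apply]
      by_cases hbI : b ∈ I
      · simp only [hbI, if_true]
        by_cases hblvl : G.lvl b = n + l + 1
        · have h := hL l hlL b hbI hblvl
          have hLHS : (∑ᶠ ν ∈ {ν : G.V | ν ∈ I ∧ G.lvl ν = m}, β ν * G.dim ν b) = Bv b := by
            rw [finsum_mem_def]
            rw [finsum_eq_sum_of_support_subset _ (s := β.support) ?_]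
            · rw [hBvapp]
              refine Finset.sum_congr rfl fun ν hν => ?_
              have hβν := Finsupp.mem_support_iff.1 hν
              obtain ⟨hνI, hνm⟩ := hβsupp ν hβν
              rw [Set.indicator_of_mem (show ν ∈ {ν : G.V | ν ∈ I ∧ G.lvl ν = m} from ⟨hνI, hνm⟩)]
              rw [GradedGraph.dim, hνm, hblvl]
            · intro ν hν
              have hne : Set.indicator {ν : G.V | ν ∈ I ∧ G.lvl ν = m}
                  (fun ν => β ν * G.dim ν b) ν ≠ 0 := hν
              by_cases hmem : ν ∈ {ν : G.V | ν ∈ I ∧ G.lvl ν = m}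
              · rw [Set.indicator_of_mem hmem] at hne
                exact Finsupp.mem_support_iff.2 (left_ne_zero_of_mul hne)
              · rw [Set.indicator_of_notMem hmem] at hne
                exact absurd rfl hne
          have hRHS : (∑ᶠ μ ∈ {μ : G.V | μ ∉ I ∧ G.lvl μ = n + l}, G.dim lam μ * G.k μ b)
              = E b := by
            rw [finsum_mem_def]
            rw [finsum_eq_sum_of_support_subset _ (s := (Jp j).support) ?_]
            · rw [hE, G.step_apply]
              refine Finset.sum_congr rfl fun μ hμ => ?_
              obtain ⟨hμI, hDμ⟩ := hJpsupp μ hμ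
              have hμlvl : G.lvl μ = n + l := hDlvl l μ hDμ
              rw [Set.indicator_of_mem (show μ ∈ {μ : G.V | μ ∉ I ∧ G.lvl μ = n + l} from
                ⟨hμI, hμlvl⟩)]
              rw [GradedGraph.dim, hμlvl, ← hn, hJpD μ hμI, hDapp]
              congr 2
              omega
            · intro μ hμ
              have hne : Set.indicator {μ : G.V | μ ∉ I ∧ G.lvl μ = n + l}
                  (fun μ => G.dim lam μ * G.k μ b) μ ≠ 0 := hμ
              by_cases hmem : μ ∈ {μ : G.V | μ ∉ I ∧ G.lvl μ = n + l}
              · rw [Set.indicator_of_mem hmem] at hne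
                have hd : G.dim lam μ ≠ 0 := left_ne_zero_of_mul hne
                rw [GradedGraph.dim, hmem.2, ← hn] at hd
                have hsub : n + l - n = l := by omega
                rw [hsub] at hd
                refine Finsupp.mem_support_iff.2 ?_
                rw [hJpD μ hmem.1, hDapp]
                exact hd
              · rw [Set.indicator_of_notMem hmem] at hne
                exact absurd rfl hne
          calc Bv b = _ := hLHS.symm
            _ ≤ _ := h
            _ = E b := hRHS
        · have hz : Bv b = 0 := by
            by_contra hcon
            exact hblvl (hBvlvl b hcon)
          rw [hz]
          exact hEnn b
      · simp only [hbI, if_false]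
        exact le_of_eq (hBvI b hbI)
    set eI := E.filter (fun b => b ∈ I) - Bv with heI
    have heInn : ∀ a, 0 ≤ eI a := by
      intro a
      rw [heI, Finsupp.sub_apply]
      exact sub_nonneg.2 (hmain a)
    refine ⟨eI, heInn, ?_⟩
    have h1 : G.toK0 (Jp j) = G.toK0 E := (G.toK0_step _).symm
    have hsplit : E.filter (fun b => b ∈ I) + E.filter (fun b => ¬ b ∈ I) = E :=
      Finsupp.filter_pos_add_filter_neg E _
    have hfilterJ : E.filter (fun b => ¬ b ∈ I) = Jp (j + 1) := by
      ext b
      rw [Finsupp.filter_apply, hJpapp (j + 1) b,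
        show L' + (j + 1) = l + 1 from by omega]
      by_cases hb : b ∈ I
      · simp [hb]
      · simp only [hb, not_false_iff, if_true]
        exact hEJ b hb
    have h2 : E.filter (fun b => b ∈ I) = Bv + eI := by
      rw [heI]
      abel
    rw [h1, ← hsplit, map_add, hfilterJ, h2, map_add, hK0Bv]
    abel
  have main : ∀ N : ℕ, ∃ c : G.V →₀ ℝ, (∀ a, 0 ≤ c a) ∧
      G.vtx lam = (N : ℝ) • G.toK0 β + G.toK0 (Jp N) + G.toK0 c := by
    intro N
    induction N with
    | zero =>
        refine ⟨(D L').filter (fun a => a ∈ I), fun a => ?_, ?_⟩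
        · rw [Finsupp.filter_apply]
          split
          · exact hDnn L' a
          · exact le_refl 0
        · rw [Nat.cast_zero, zero_smul, zero_add, ← map_add]
          have hsum : Jp 0 + (D L').filter (fun a => a ∈ I) = D L' := by
            ext b
            rw [Finsupp.add_apply, hJpapp 0 b, Nat.add_zero, Finsupp.filter_apply]
            by_cases hb : b ∈ I <;> simp [hb]
          rw [hsum, hDK0 L']
    | succ N ih =>
        obtain ⟨c, hc, hrep⟩ := ih
        obtain ⟨e, he, hkey⟩ := key N
        refine ⟨c + e, fun a => by
          rw [Finsupp.add_apply]; exact add_nonneg (hc a) (he a), ?_⟩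
        have hstep : G.vtx lam = (N : ℝ) • G.toK0 β
            + (G.toK0 β + G.toK0 (Jp (N + 1)) + G.toK0 e) + G.toK0 c := by
          rw [← hkey]; exact hrep
        rw [hstep, map_add]
        push_cast
        rw [add_smul, one_smul]
        abel
  intro N
  obtain ⟨c, hc, hrep⟩ := main N
  show G.vtx lam - (N : ℝ) • G.toK0 β ∈ G.cone
  rw [hrep]
  have heq : (N : ℝ) • G.toK0 β + G.toK0 (Jp N) + G.toK0 c - (N : ℝ) • G.toK0 β
      = G.toK0 (Jp N + c) := by
    rw [map_add]; abel
  rw [heq]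
  exact G.mem_cone fun a => by
    rw [Finsupp.add_apply]; exact add_nonneg (hJpnn N a) (hc a)
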